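/- arXiv:2002.12688 — 2 statements merged into one kernel-verified Lean document; each statement's English description precedes it below -/
import Mathlib

section
/- For the decentralized update W(k+1) = W(k)A − η(k)G(k) with possibly time-varying learning rates η(k) > 0 and A an M×M nonnegative, doubly stochastic, irreducible, primitive, normal matrix with spectral projectors P_q, for every k ≥ 0: E_ξ[ ||ΔW(k+1)||_F ] ≤ √M·||ΔW(0)||_F·|λ2|^{k+1} + Σ_{h=0}^{k} η(h)·sqrt( Σ_{q=2}^{Q} |λ_q|^{2(k−h)}·E_ξ[ ||ΔG(h)P_q||²_F ] ). -/
open MeasureTheory Matrix Finset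

noncomputable section

/-- Squared Frobenius norm of a real matrix. -/
def frobSq {n M : ℕ} (B : Matrix (Fin n) (Fin M) ℝ) : ℝ := ∑ i, ∑ j, B i j ^ 2

/-- Frobenius norm of a real matrix. -/
def frobNorm {n M : ℕ} (B : Matrix (Fin n) (Fin M) ℝ) : ℝ := Real.sqrt (frobSq B)

/-- Squared Frobenius norm of a complex matrix. -/
def frobSqC {n M : ℕ} (B : Matrix (Fin n) (Fin M) ℂ) : ℝ := ∑ i, ∑ j, ‖B i j‖ ^ 2

/-- The `j`-th column of a matrix, viewed as a vector of `EuclideanSpace ℝ (Fin n)`. -/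
def col {n M : ℕ} (B : Matrix (Fin n) (Fin M) ℝ) (j : Fin M) : EuclideanSpace ℝ (Fin n) :=
  WithLp.toLp 2 fun i => B i j

/-- `ΔB := B (I - 𝟙𝟙ᵀ/M)`: subtract from every column the average of all columns. -/
def ctr {n M : ℕ} (B : Matrix (Fin n) (Fin M) ℝ) : Matrix (Fin n) (Fin M) ℝ :=
  Matrix.of fun i j => B i j - (∑ j', B i j') / M

/-- The average of the columns of `B` (the average model `w̄`). -/
def colAvg {n M : ℕ} (B : Matrix (Fin n) (Fin M) ℝ) : EuclideanSpace ℝ (Fin n) :=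
  WithLp.toLp 2 fun i => (∑ j, B i j) / M

/-- Time average of a sequence of vectors over iterations `0, …, K-1`. -/
def timeAvg {n : ℕ} (K : ℕ) (v : ℕ → EuclideanSpace ℝ (Fin n)) : EuclideanSpace ℝ (Fin n) :=
  WithLp.toLp 2 fun i => (∑ k ∈ Finset.range K, v k i) / K

/-- `g` is a subgradient of `f` at `x`. -/
def IsSubgradAt {n : ℕ} (f : EuclideanSpace ℝ (Fin n) → ℝ)
    (g x : EuclideanSpace ℝ (Fin n)) : Prop :=
  ∀ y, f x + (inner ℝ g (y - x) : ℝ) ≤ f y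

namespace Stmt9Aux

variable {n M : ℕ}

def toE (B : Matrix (Fin n) (Fin M) ℝ) : EuclideanSpace ℝ (Fin n × Fin M) :=
  WithLp.toLp 2 fun p => B p.1 p.2

def toEC (B : Matrix (Fin n) (Fin M) ℂ) : EuclideanSpace ℂ (Fin n × Fin M) :=
  WithLp.toLp 2 fun p => B p.1 p.2

lemma frobNorm_eq_norm (B : Matrix (Fin n) (Fin M) ℝ) : frobNorm B = ‖toE B‖ := by
  rw [EuclideanSpace.norm_eq, frobNorm, frobSq]
  congr 1
  rw [Fintype.sum_prod_type]
  simp [toE, Real.norm_eq_abs, sq_abs]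

lemma frobSqC_eq_norm_sq (B : Matrix (Fin n) (Fin M) ℂ) : frobSqC B = ‖toEC B‖ ^ 2 := by
  rw [EuclideanSpace.norm_eq, Real.sq_sqrt (by positivity)]
  rw [Fintype.sum_prod_type]
  simp [frobSqC, toEC]

lemma frobSqC_nonneg (B : Matrix (Fin n) (Fin M) ℂ) : 0 ≤ frobSqC B := by
  unfold frobSqC; positivity

lemma frobSq_eq (B : Matrix (Fin n) (Fin M) ℝ) :
    frobSq B = frobSqC (B.map (fun x => (x : ℂ))) := by
  unfold frobSq frobSqC
  refine Finset.sum_congr rfl fun i _ => Finset.sum_congr rfl fun j _ => ?_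
  simp [Matrix.map_apply, Complex.norm_real, Real.norm_eq_abs, sq_abs]

lemma toE_sub (B C : Matrix (Fin n) (Fin M) ℝ) : toE (B - C) = toE B - toE C := by ext; rfl

lemma toE_smul (r : ℝ) (B : Matrix (Fin n) (Fin M) ℝ) : toE (r • B) = r • toE B := by ext; rfl

lemma toE_sum {κ : Type*} (s : Finset κ) (v : κ → Matrix (Fin n) (Fin M) ℝ) :
    toE (∑ q ∈ s, v q) = ∑ q ∈ s, toE (v q) := by
  classical
  induction s using Finset.cons_induction with
  | empty => ext; simp [toE, toEC]
  | cons a s ha ih => rw [Finset.sum_cons, Finset.sum_cons, ← ih]; ext; rfl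

lemma toEC_smul (c : ℂ) (B : Matrix (Fin n) (Fin M) ℂ) : toEC (c • B) = c • toEC B := by ext; rfl

lemma toEC_sum {κ : Type*} (s : Finset κ) (v : κ → Matrix (Fin n) (Fin M) ℂ) :
    toEC (∑ q ∈ s, v q) = ∑ q ∈ s, toEC (v q) := by
  classical
  induction s using Finset.cons_induction with
  | empty => ext; simp [toE, toEC]
  | cons a s ha ih => rw [Finset.sum_cons, Finset.sum_cons, ← ih]; ext; rfl

lemma frobNorm_sub_le (B C : Matrix (Fin n) (Fin M) ℝ) :
    frobNorm (B - C) ≤ frobNorm B + frobNorm C := by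
  rw [frobNorm_eq_norm, frobNorm_eq_norm, frobNorm_eq_norm, toE_sub]
  exact norm_sub_le _ _

lemma frobNorm_sum_le {κ : Type*} (s : Finset κ) (v : κ → Matrix (Fin n) (Fin M) ℝ) :
    frobNorm (∑ q ∈ s, v q) ≤ ∑ q ∈ s, frobNorm (v q) := by
  rw [frobNorm_eq_norm, toE_sum]
  refine le_trans (norm_sum_le _ _) (le_of_eq ?_)
  exact Finset.sum_congr rfl fun q _ => (frobNorm_eq_norm _).symm

lemma frobNorm_smul (r : ℝ) (B : Matrix (Fin n) (Fin M) ℝ) :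
    frobNorm (r • B) = |r| * frobNorm B := by
  rw [frobNorm_eq_norm, frobNorm_eq_norm, toE_smul, norm_smul, Real.norm_eq_abs]

lemma frobSqC_smul (c : ℂ) (B : Matrix (Fin n) (Fin M) ℂ) :
    frobSqC (c • B) = ‖c‖ ^ 2 * frobSqC B := by
  rw [frobSqC_eq_norm_sq, frobSqC_eq_norm_sq, toEC_smul, norm_smul, mul_pow]

lemma inner_toEC (Y Z : Matrix (Fin n) (Fin M) ℂ) :
    (inner ℂ (toEC Y) (toEC Z) : ℂ) = Matrix.trace (Yᴴ * Z) := by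
  rw [PiLp.inner_apply]
  rw [Fintype.sum_prod_type]
  rw [Matrix.trace]
  simp only [Matrix.diag, Matrix.mul_apply, Matrix.conjTranspose_apply, RCLike.inner_apply]
  rw [Finset.sum_comm]
  simp only [toEC]
  exact Finset.sum_congr rfl fun _ _ => Finset.sum_congr rfl fun _ _ => mul_comm _ _

lemma pyth {ι κ : Type*} [Fintype ι] (s : Finset κ) (v : κ → EuclideanSpace ℂ ι)
    (h : ∀ q ∈ s, ∀ q' ∈ s, q ≠ q' → (inner ℂ (v q) (v q') : ℂ) = 0) :
    ‖∑ q ∈ s, v q‖ ^ 2 = ∑ q ∈ s, ‖v q‖ ^ 2 := by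
  classical
  induction s using Finset.cons_induction with
  | empty => simp
  | cons a s ha ih =>
    rw [Finset.sum_cons, Finset.sum_cons, norm_add_sq (𝕜 := ℂ)]
    have hz : (inner ℂ (v a) (∑ q ∈ s, v q) : ℂ) = 0 := by
      rw [inner_sum]
      exact Finset.sum_eq_zero fun q hq =>
        h a (Finset.mem_cons_self a s) q (Finset.mem_cons_of_mem hq)
          (fun he => ha (he ▸ hq))
    rw [hz, ih (fun q hq q' hq' hne =>
      h q (Finset.mem_cons_of_mem hq) q' (Finset.mem_cons_of_mem hq') hne)]
    simp

lemma sqrt_integrable {Ω : Type*} [MeasurableSpace Ω] {μ : Measure Ω} [IsProbabilityMeasure μ]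
    {f : Ω → ℝ} (hf : Integrable f μ) (h0 : ∀ ω, 0 ≤ f ω) :
    Integrable (fun ω => Real.sqrt (f ω)) μ := by
  have hb : Integrable (fun ω => (f ω + 1) / 2) μ := (hf.add (integrable_const 1)).div_const 2
  refine Integrable.mono' hb
    (Real.continuous_sqrt.comp_aestronglyMeasurable hf.1)
    (Filter.Eventually.of_forall fun ω => ?_)
  rw [Real.norm_eq_abs, abs_of_nonneg (Real.sqrt_nonneg _)]
  nlinarith [Real.sq_sqrt (h0 ω), Real.sqrt_nonneg (f ω), sq_nonneg (Real.sqrt (f ω) - 1)]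

lemma integral_sqrt_le {Ω : Type*} [MeasurableSpace Ω] (μ : Measure Ω) [IsProbabilityMeasure μ]
    (f : Ω → ℝ) (hf : Integrable f μ) (h0 : ∀ ω, 0 ≤ f ω) :
    (∫ ω, Real.sqrt (f ω) ∂μ) ≤ Real.sqrt (∫ ω, f ω ∂μ) := by
  have hI0 : 0 ≤ ∫ ω, f ω ∂μ := integral_nonneg h0
  have hsint := sqrt_integrable hf h0
  have key : ∀ s : ℝ, 0 < s →
      2 * s * ∫ ω, Real.sqrt (f ω) ∂μ ≤ (∫ ω, f ω ∂μ) + s ^ 2 := by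
    intro s hs
    have h1 : ∫ ω, (2 * s) * Real.sqrt (f ω) ∂μ ≤ ∫ ω, (f ω + s ^ 2) ∂μ :=
      integral_mono (hsint.const_mul _) (hf.add (integrable_const _)) (fun ω => by
        nlinarith [sq_nonneg (Real.sqrt (f ω) - s), Real.sq_sqrt (h0 ω)])
    rw [integral_const_mul, integral_add hf (integrable_const _), integral_const] at h1
    simpa [measure_univ] using h1
  rcases eq_or_lt_of_le hI0 with h0' | hpos
  · rw [← h0', Real.sqrt_zero]
    refine le_of_forall_pos_le_add fun ε hε => ?_
    have := key ε hε
    rw [← h0'] at this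
    nlinarith
  · have hs := Real.sqrt_pos.mpr hpos
    have hk := key (Real.sqrt (∫ ω, f ω ∂μ)) hs
    rw [Real.sq_sqrt hI0] at hk
    have h2 : (∫ ω, Real.sqrt (f ω) ∂μ) ≤ (∫ ω, f ω ∂μ) / Real.sqrt (∫ ω, f ω ∂μ) := by
      rw [le_div_iff₀ hs]; nlinarith
    rwa [Real.div_sqrt] at h2

end Stmt9Aux

/-- **Lemma 1 (consensus error).** For the decentralized update
`W(k+1) = W(k) A - η(k) G(k)` with time-varying learning rates, the expected consensus error
is controlled by the spectral projections of the subgradient noise. -/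
theorem statement9
    (n M Q : ℕ) (hM : 0 < M) (hQ : 1 < Q)
    -- the consensus matrix: nonnegative, doubly stochastic (A4), normal (A4),
    -- irreducible (strongly connected graph, A3) and primitive (positive diagonal)
    (A : Matrix (Fin M) (Fin M) ℝ)
    (hnonneg : ∀ i j, 0 ≤ A i j)
    (hrows : ∀ i, ∑ j, A i j = 1)
    (hcols : ∀ j, ∑ i, A i j = 1)
    (hnormal : Aᵀ * A = A * Aᵀ)
    (hirr : ∀ i j, ∃ k : ℕ, 0 < (A ^ k) i j)
    (hdiag : ∀ i, 0 < A i i)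
    -- spectral decomposition of `A` into orthogonal projectors onto its `Q` distinct
    -- eigenspaces, with eigenvalues ordered by decreasing modulus, `λ₁ = 1 > |λ₂|`
    (lam : Fin Q → ℂ) (P : Fin Q → Matrix (Fin M) (Fin M) ℂ)
    (hdecomp : A.map (fun x => (x : ℂ)) = ∑ q, lam q • P q)
    (hinj : Function.Injective lam)
    (hherm : ∀ q, (P q)ᴴ = P q)
    (hidem : ∀ q, P q * P q = P q)
    (horth : ∀ q q', q ≠ q' → P q * P q' = 0)
    (hPsum : ∑ q, P q = 1)
    (hord : ∀ q q' : Fin Q, q ≤ q' → ‖lam q'‖ ≤ ‖lam q‖)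
    (hlam1 : ∀ q : Fin Q, (q : ℕ) = 0 → lam q = 1)
    (hP1 : ∀ q : Fin Q, (q : ℕ) = 0 → P q = Matrix.of fun _ _ => (M : ℂ)⁻¹)
    (lam2 : ℝ) (hlam2 : lam2 = ‖lam ⟨1, hQ⟩‖) (hlam2lt : lam2 < 1)
    -- probability space carrying the minibatch randomness, the random iterates `W k`
    -- and the random stochastic subgradient matrices `G k`
    {Ω : Type*} [m0 : MeasurableSpace Ω] (μ : Measure Ω) [IsProbabilityMeasure μ]
    (W G : ℕ → Ω → Matrix (Fin n) (Fin M) ℝ)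
    (hGmeas : ∀ k i j, Measurable fun ω => G k ω i j)
    -- time-varying learning rates and the decentralized update, with deterministic
    -- initialization `W0`
    (η : ℕ → ℝ) (hη : ∀ k, 0 < η k)
    (W0 : Matrix (Fin n) (Fin M) ℝ) (hW0 : ∀ ω, W 0 ω = W0)
    (hupd : ∀ k ω, W (k + 1) ω = W k ω * A - η k • G k ω)
    -- integrability
    (hWint : ∀ k, Integrable (fun ω => frobNorm (ctr (W k ω))) μ)
    (hGint : ∀ k (q : Fin Q),
      Integrable (fun ω => frobSqC ((ctr (G k ω)).map (fun x => (x : ℂ)) * P q)) μ) :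
    ∀ k : ℕ,
      ∫ ω, frobNorm (ctr (W (k + 1) ω)) ∂μ ≤
        Real.sqrt M * frobNorm (ctr W0) * lam2 ^ (k + 1)
        + ∑ h ∈ Finset.range (k + 1), η h *
            Real.sqrt (∑ q ∈ Finset.univ.filter (fun q : Fin Q => (q : ℕ) ≠ 0),
              ‖lam q‖ ^ (2 * (k - h)) *
                ∫ ω, frobSqC ((ctr (G h ω)).map (fun x => (x : ℂ)) * P q) ∂μ) := by

  have hMne : (M : ℝ) ≠ 0 := Nat.cast_ne_zero.mpr hM.ne'
  have hlam2nn : 0 ≤ lam2 := hlam2 ▸ norm_nonneg _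
  -- ctr is linear and commutes with right multiplication by A
  have ctr_sub : ∀ (B C : Matrix (Fin n) (Fin M) ℝ), ctr (B - C) = ctr B - ctr C := by
    intro B C; ext i j
    simp only [ctr, Matrix.of_apply, Matrix.sub_apply, Finset.sum_sub_distrib, sub_div]
    ring
  have ctr_smul : ∀ (r : ℝ) (B : Matrix (Fin n) (Fin M) ℝ), ctr (r • B) = r • ctr B := by
    intro r B; ext i j
    simp only [ctr, Matrix.of_apply, Matrix.smul_apply, smul_eq_mul, ← Finset.mul_sum]
    ring
  have ctr_mulA : ∀ (B : Matrix (Fin n) (Fin M) ℝ), ctr (B * A) = ctr B * A := by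
    intro B; ext i j
    simp only [ctr, Matrix.of_apply, Matrix.mul_apply]
    have h1 : ∑ j' : Fin M, ∑ l, B i l * A l j' = ∑ l, B i l := by
      rw [Finset.sum_comm]
      refine Finset.sum_congr rfl fun l _ => ?_
      rw [← Finset.mul_sum, hrows l, mul_one]
    have h2 : ∑ l, (B i l - (∑ j', B i j') / M) * A l j
        = (∑ l, B i l * A l j) - (∑ j', B i j') / M := by
      simp_rw [sub_mul]
      rw [Finset.sum_sub_distrib, ← Finset.mul_sum, hcols j, mul_one]
    rw [h2, h1]
  -- complexification commutes with products and powers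
  have map_mul' : ∀ (X : Matrix (Fin n) (Fin M) ℝ) (Y : Matrix (Fin M) (Fin M) ℝ),
      (X * Y).map (fun x => (x : ℂ)) = X.map (fun x => (x : ℂ)) * Y.map (fun x => (x : ℂ)) := by
    intro X Y; ext i j
    simp only [Matrix.mul_apply, Matrix.map_apply]
    push_cast
    rfl
  have map_mulMM : ∀ (X Y : Matrix (Fin M) (Fin M) ℝ),
      (X * Y).map (fun x => (x : ℂ)) = X.map (fun x => (x : ℂ)) * Y.map (fun x => (x : ℂ)) := by
    intro X Y; ext i j
    simp only [Matrix.mul_apply, Matrix.map_apply]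
    push_cast
    rfl
  have map_eq : ∀ (m : ℕ),
      (A ^ m).map (fun x => (x : ℂ)) = (A.map (fun x => (x : ℂ))) ^ m := by
    intro m
    induction m with
    | zero =>
      rw [pow_zero, pow_zero]
      ext i j
      simp [Matrix.map_apply, Matrix.one_apply, apply_ite (fun x : ℝ => (x : ℂ))]
    | succ m ih =>
      rw [pow_succ, pow_succ, ← ih, map_mulMM]
  -- A^m = ∑_q λ_q^m P_q over ℂ
  have hAm : ∀ m : ℕ, (A.map (fun x => (x : ℂ))) ^ m = ∑ q, lam q ^ m • P q := by
    intro m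
    induction m with
    | zero => simp [hPsum]
    | succ m ih =>
      rw [pow_succ, ih, hdecomp, Matrix.sum_mul]
      refine Finset.sum_congr rfl fun q _ => ?_
      rw [Matrix.smul_mul, Matrix.mul_sum]
      rw [Finset.sum_eq_single q]
      · rw [Matrix.mul_smul, hidem q, smul_smul, ← pow_succ]
      · intro q' _ hne
        rw [Matrix.mul_smul, horth q q' (Ne.symm hne), smul_zero]
      · intro h; exact absurd (Finset.mem_univ q) h
  -- centered matrices are killed by the first projector
  have hP0 : ∀ (B : Matrix (Fin n) (Fin M) ℝ) (q : Fin Q), (q : ℕ) = 0 →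
      (ctr B).map (fun x => (x : ℂ)) * P q = 0 := by
    intro B q hq
    have hrs : ∀ i, ∑ j, ctr B i j = 0 := by
      intro i
      simp only [ctr, Matrix.of_apply]
      rw [Finset.sum_sub_distrib, Finset.sum_const, Finset.card_univ, Fintype.card_fin,
        nsmul_eq_mul, mul_div_cancel₀ _ hMne, sub_self]
    rw [hP1 q hq]
    ext i j
    simp only [Matrix.mul_apply, Matrix.map_apply, Matrix.of_apply, Matrix.zero_apply]
    rw [← Finset.sum_mul, ← Complex.ofReal_sum, hrs i]
    simp
  -- orthogonality of the projections in Frobenius inner product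
  have horthXP : ∀ (X : Matrix (Fin n) (Fin M) ℂ) (q q' : Fin Q), q ≠ q' →
      (inner ℂ (Stmt9Aux.toEC (X * P q)) (Stmt9Aux.toEC (X * P q')) : ℂ) = 0 := by
    intro X q q' hne
    rw [Stmt9Aux.inner_toEC]
    rw [Matrix.conjTranspose_mul, hherm]
    rw [show P q * Xᴴ * (X * P q') = (P q * Xᴴ * X) * P q' from (Matrix.mul_assoc _ _ _).symm]
    rw [Matrix.trace_mul_comm, ← Matrix.mul_assoc, ← Matrix.mul_assoc,
      horth q' q (Ne.symm hne)]
    simp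
  -- the key spectral identity
  have KI : ∀ (B : Matrix (Fin n) (Fin M) ℝ) (m : ℕ),
      frobSq (ctr B * A ^ m)
        = ∑ q ∈ Finset.univ.filter (fun q : Fin Q => (q : ℕ) ≠ 0),
            ‖lam q‖ ^ (2 * m) * frobSqC ((ctr B).map (fun x => (x : ℂ)) * P q) := by
    intro B m
    rw [Stmt9Aux.frobSq_eq, map_mul', map_eq, hAm, Matrix.mul_sum]
    simp_rw [Matrix.mul_smul]
    rw [Stmt9Aux.frobSqC_eq_norm_sq, Stmt9Aux.toEC_sum, Stmt9Aux.pyth]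
    · have he : ∀ q : Fin Q,
          ‖Stmt9Aux.toEC (lam q ^ m • ((ctr B).map (fun x => (x : ℂ)) * P q))‖ ^ 2
            = ‖lam q‖ ^ (2 * m) * frobSqC ((ctr B).map (fun x => (x : ℂ)) * P q) := by
        intro q
        rw [← Stmt9Aux.frobSqC_eq_norm_sq, Stmt9Aux.frobSqC_smul, norm_pow, ← pow_mul,
          mul_comm m 2]
      rw [Finset.sum_congr rfl (fun q _ => he q)]
      refine (Finset.sum_subset (Finset.subset_univ _) fun q _ hq => ?_).symm
      have hq0 : (q : ℕ) = 0 := by simpa using hq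
      rw [hP0 B q hq0]
      simp [frobSqC]
    · intro q _ q' _ hne
      rw [Stmt9Aux.toEC_smul, Stmt9Aux.toEC_smul, inner_smul_left, inner_smul_right,
        horthXP _ q q' hne, mul_zero, mul_zero]
  have KIn : ∀ (B : Matrix (Fin n) (Fin M) ℝ) (m : ℕ),
      frobNorm (ctr B * A ^ m)
        = Real.sqrt (∑ q ∈ Finset.univ.filter (fun q : Fin Q => (q : ℕ) ≠ 0),
            ‖lam q‖ ^ (2 * m) * frobSqC ((ctr B).map (fun x => (x : ℂ)) * P q)) := by
    intro B m
    rw [frobNorm, KI B m]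
  -- sum of squared projections of the initial error
  have hsum0 : ∑ q ∈ Finset.univ.filter (fun q : Fin Q => (q : ℕ) ≠ 0),
      frobSqC ((ctr W0).map (fun x => (x : ℂ)) * P q) = frobSq (ctr W0) := by
    have h := KI W0 0
    rw [pow_zero, Matrix.mul_one] at h
    simp only [Nat.mul_zero, pow_zero, one_mul] at h
    exact h.symm
  have hlamle : ∀ q : Fin Q, (q : ℕ) ≠ 0 → ‖lam q‖ ≤ lam2 := by
    intro q hq
    have h1 : (⟨1, hQ⟩ : Fin Q) ≤ q := Nat.one_le_iff_ne_zero.mpr hq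
    rw [hlam2]
    exact hord _ _ h1
  -- bound on the initialization term
  have FB : ∀ m : ℕ, frobNorm (ctr W0 * A ^ m)
      ≤ Real.sqrt M * frobNorm (ctr W0) * lam2 ^ m := by
    intro m
    rw [KIn]
    have hle : (∑ q ∈ Finset.univ.filter (fun q : Fin Q => (q : ℕ) ≠ 0),
        ‖lam q‖ ^ (2 * m) * frobSqC ((ctr W0).map (fun x => (x : ℂ)) * P q))
          ≤ lam2 ^ (2 * m) * frobSq (ctr W0) := by
      rw [← hsum0, Finset.mul_sum]
      refine Finset.sum_le_sum fun q hq => ?_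
      have hq0 : (q : ℕ) ≠ 0 := (Finset.mem_filter.mp hq).2
      exact mul_le_mul_of_nonneg_right
        (pow_le_pow_left₀ (norm_nonneg _) (hlamle q hq0) _) (Stmt9Aux.frobSqC_nonneg _)
    refine le_trans (Real.sqrt_le_sqrt hle) ?_
    rw [Real.sqrt_mul (by positivity), mul_comm 2 m, pow_mul,
      Real.sqrt_sq (pow_nonneg hlam2nn m)]
    have h1M : (1 : ℝ) ≤ Real.sqrt M := by
      rw [show (1 : ℝ) = Real.sqrt 1 from (Real.sqrt_one).symm]
      exact Real.sqrt_le_sqrt (by exact_mod_cast hM)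
    calc lam2 ^ m * Real.sqrt (frobSq (ctr W0))
        = frobNorm (ctr W0) * lam2 ^ m := by rw [frobNorm]; ring
      _ ≤ (Real.sqrt M * frobNorm (ctr W0)) * lam2 ^ m := by
          refine mul_le_mul_of_nonneg_right ?_ (pow_nonneg hlam2nn m)
          exact le_mul_of_one_le_left (Real.sqrt_nonneg _) h1M
      _ = Real.sqrt M * frobNorm (ctr W0) * lam2 ^ m := by ring
  -- unroll the recursion
  have unroll : ∀ (k : ℕ) (ω : Ω),
      ctr (W (k + 1) ω) = ctr W0 * A ^ (k + 1)
        - ∑ h ∈ Finset.range (k + 1), η h • (ctr (G h ω) * A ^ (k - h)) := by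
    intro k
    induction k with
    | zero =>
      intro ω
      rw [hupd 0 ω, ctr_sub, ctr_smul, ctr_mulA, hW0]
      simp [Matrix.mul_one]
    | succ k ih =>
      intro ω
      rw [hupd (k + 1) ω, ctr_sub, ctr_smul, ctr_mulA, ih ω, Matrix.sub_mul]
      have hsum : (∑ h ∈ Finset.range (k + 1), η h • (ctr (G h ω) * A ^ (k - h))) * A
          = ∑ h ∈ Finset.range (k + 1), η h • (ctr (G h ω) * A ^ (k + 1 - h)) := by
        rw [Matrix.sum_mul]
        refine Finset.sum_congr rfl fun h hh => ?_
        have hhk : h ≤ k := Nat.lt_succ_iff.mp (Finset.mem_range.mp hh)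
        have he : k + 1 - h = (k - h) + 1 := by omega
        rw [Matrix.smul_mul, Matrix.mul_assoc, ← pow_succ, he]
      rw [hsum, Matrix.mul_assoc, ← pow_succ, sub_sub]
      conv_rhs => rw [Finset.sum_range_succ, Nat.sub_self, pow_zero, Matrix.mul_one]
  intro k
  -- integrability of the noise envelopes
  have hg_int : ∀ h : ℕ, Integrable (fun ω =>
      ∑ q ∈ Finset.univ.filter (fun q : Fin Q => (q : ℕ) ≠ 0),
        ‖lam q‖ ^ (2 * (k - h)) *
          frobSqC ((ctr (G h ω)).map (fun x => (x : ℂ)) * P q)) μ := by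
    intro h
    exact integrable_finset_sum _ fun q _ => (hGint h q).const_mul _
  have hg_nonneg : ∀ (h : ℕ) (ω : Ω), 0 ≤
      ∑ q ∈ Finset.univ.filter (fun q : Fin Q => (q : ℕ) ≠ 0),
        ‖lam q‖ ^ (2 * (k - h)) *
          frobSqC ((ctr (G h ω)).map (fun x => (x : ℂ)) * P q) :=
    fun h ω => Finset.sum_nonneg fun q _ =>
      mul_nonneg (pow_nonneg (norm_nonneg _) _) (Stmt9Aux.frobSqC_nonneg _)
  have hS_int : ∀ h : ℕ, Integrable (fun ω => Real.sqrt
      (∑ q ∈ Finset.univ.filter (fun q : Fin Q => (q : ℕ) ≠ 0),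
        ‖lam q‖ ^ (2 * (k - h)) *
          frobSqC ((ctr (G h ω)).map (fun x => (x : ℂ)) * P q))) μ :=
    fun h => Stmt9Aux.sqrt_integrable (hg_int h) (hg_nonneg h)
  -- pointwise bound
  have stepA : ∀ ω : Ω, frobNorm (ctr (W (k + 1) ω)) ≤
      Real.sqrt M * frobNorm (ctr W0) * lam2 ^ (k + 1)
        + ∑ h ∈ Finset.range (k + 1), η h * Real.sqrt
            (∑ q ∈ Finset.univ.filter (fun q : Fin Q => (q : ℕ) ≠ 0),
              ‖lam q‖ ^ (2 * (k - h)) *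
                frobSqC ((ctr (G h ω)).map (fun x => (x : ℂ)) * P q)) := by
    intro ω
    rw [unroll k ω]
    refine le_trans (Stmt9Aux.frobNorm_sub_le _ _) (add_le_add (FB (k + 1)) ?_)
    refine le_trans (Stmt9Aux.frobNorm_sum_le _ _) (le_of_eq ?_)
    refine Finset.sum_congr rfl fun h _ => ?_
    rw [Stmt9Aux.frobNorm_smul, abs_of_pos (hη h), KIn (G h ω) (k - h)]
  -- integrate
  have hRHS_int : Integrable (fun ω =>
      Real.sqrt M * frobNorm (ctr W0) * lam2 ^ (k + 1)
        + ∑ h ∈ Finset.range (k + 1), η h * Real.sqrt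
            (∑ q ∈ Finset.univ.filter (fun q : Fin Q => (q : ℕ) ≠ 0),
              ‖lam q‖ ^ (2 * (k - h)) *
                frobSqC ((ctr (G h ω)).map (fun x => (x : ℂ)) * P q))) μ :=
    (integrable_const _).add
      (integrable_finset_sum _ fun h _ => (hS_int h).const_mul (η h))
  refine le_trans (integral_mono (hWint (k + 1)) hRHS_int stepA) ?_
  rw [integral_add (integrable_const _)
    (integrable_finset_sum _ fun h _ => (hS_int h).const_mul (η h)),
    integral_const, integral_finset_sum _ (fun h _ => (hS_int h).const_mul (η h))]
  simp only [measure_univ, ENNReal.toReal_one, probReal_univ, smul_eq_mul, one_mul]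
  refine add_le_add le_rfl (Finset.sum_le_sum fun h _ => ?_)
  rw [integral_const_mul]
  refine mul_le_mul_of_nonneg_left ?_ (hη h).le
  refine le_trans (Stmt9Aux.integral_sqrt_le μ _ (hg_int h) (hg_nonneg h)) (le_of_eq ?_)
  congr 1
  rw [integral_finset_sum _ (fun q _ => (hGint h q).const_mul _)]
  exact Finset.sum_congr rfl fun q _ => integral_const_mul _ _

end
end

section
/- For the decentralized update with constant learning rate η > 0, with R_sp ≥ ||ΔW(0)||²_F, E_sp ≥ sup_k E_ξ||ΔG(k)||²_F, e_q (for q ≥ 2, summing to 1) upper bounds on the normalized fractions of expected energy of ΔG(k) in the range of P_q, and α := sqrt(Σ_{q=2}^Q e_q |λ_q/λ2|²) (α := 1 if λ2 = 0), the following holds for every k ≥ 0: E_ξ[ ||ΔW(k)||_F ] ≤ √M·√R_sp·|λ2|^k + η·√E_sp·( (1−α)·1_{k ≥ 1} + α·(1−|λ2|^k)/(1−|λ2|) ). -/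
open MeasureTheory Matrix Finset

noncomputable section

lemma frobSq_nonneg {n M : ℕ} (B : Matrix (Fin n) (Fin M) ℝ) : 0 ≤ frobSq B :=
  Finset.sum_nonneg fun _ _ => Finset.sum_nonneg fun _ _ => sq_nonneg _

lemma frobSqC_nonneg {n M : ℕ} (B : Matrix (Fin n) (Fin M) ℂ) : 0 ≤ frobSqC B :=
  Finset.sum_nonneg fun _ _ => Finset.sum_nonneg fun _ _ => sq_nonneg _

lemma frobNorm_nonneg {n M : ℕ} (B : Matrix (Fin n) (Fin M) ℝ) : 0 ≤ frobNorm B :=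
  Real.sqrt_nonneg _

lemma frobSqC_map {n M : ℕ} (B : Matrix (Fin n) (Fin M) ℝ) :
    frobSqC (B.map (fun x => (x : ℂ))) = frobSq B := by
  unfold frobSqC frobSq
  simp [Matrix.map_apply, Complex.norm_real, Real.norm_eq_abs, sq_abs]

lemma trace_re_eq_frobSqC {n M : ℕ} (X : Matrix (Fin n) (Fin M) ℂ) :
    (Matrix.trace (X * Xᴴ)).re = frobSqC X := by
  unfold Matrix.trace frobSqC
  simp only [Matrix.diag, Matrix.mul_apply, Matrix.conjTranspose_apply]
  rw [Complex.re_sum]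
  refine Finset.sum_congr rfl fun i _ => ?_
  rw [Complex.re_sum]
  refine Finset.sum_congr rfl fun j _ => ?_
  simp [Complex.star_def, Complex.mul_conj, Complex.normSq_eq_norm_sq,
    ← Complex.ofReal_pow]

lemma trace_proj {n M Q : ℕ} (P : Fin Q → Matrix (Fin M) (Fin M) ℂ)
    (hherm : ∀ q, (P q)ᴴ = P q) (horth : ∀ q q', q ≠ q' → P q * P q' = 0)
    (C : Matrix (Fin n) (Fin M) ℂ) {q q' : Fin Q} (hne : q ≠ q') :
    Matrix.trace ((C * P q) * (C * P q')ᴴ) = 0 := by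
  rw [Matrix.conjTranspose_mul, hherm]
  have h : C * P q * (P q' * Cᴴ) = C * (P q * P q') * Cᴴ := by
    simp only [Matrix.mul_assoc]
  rw [h, horth q q' hne, Matrix.mul_zero, Matrix.zero_mul, Matrix.trace_zero]

lemma pyth {n M Q : ℕ} (P : Fin Q → Matrix (Fin M) (Fin M) ℂ)
    (hherm : ∀ q, (P q)ᴴ = P q) (horth : ∀ q q', q ≠ q' → P q * P q' = 0)
    (C : Matrix (Fin n) (Fin M) ℂ) (c : Fin Q → ℂ) :
    frobSqC (C * ∑ q, c q • P q) = ∑ q, ‖c q‖ ^ 2 * frobSqC (C * P q) := by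
  have hD : C * ∑ q, c q • P q = ∑ q, c q • (C * P q) := by
    rw [Matrix.mul_sum]
    exact Finset.sum_congr rfl fun q _ => (Matrix.mul_smul _ _ _)
  rw [← trace_re_eq_frobSqC, hD]
  have hT : Matrix.trace ((∑ q, c q • (C * P q)) * (∑ q', c q' • (C * P q'))ᴴ)
      = ∑ q, ∑ q', (c q * star (c q')) • Matrix.trace ((C * P q) * (C * P q')ᴴ) := by
    rw [Matrix.conjTranspose_sum]
    simp only [Matrix.conjTranspose_smul]
    rw [Matrix.sum_mul, Matrix.trace_sum]
    refine Finset.sum_congr rfl fun q _ => ?_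
    rw [Matrix.mul_sum, Matrix.trace_sum]
    refine Finset.sum_congr rfl fun q' _ => ?_
    rw [Matrix.smul_mul, Matrix.mul_smul, Matrix.trace_smul, Matrix.trace_smul, smul_smul]
  rw [hT]
  have hcollapse : ∀ q : Fin Q, ∑ q', (c q * star (c q')) • Matrix.trace ((C * P q) * (C * P q')ᴴ)
      = (c q * star (c q)) • Matrix.trace ((C * P q) * (C * P q)ᴴ) := by
    intro q
    refine Finset.sum_eq_single q (fun q' _ hne => ?_) (fun h => absurd (Finset.mem_univ q) h)
    rw [trace_proj P hherm horth C (Ne.symm hne), smul_zero]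
  simp only [hcollapse]
  rw [Complex.re_sum]
  refine Finset.sum_congr rfl fun q _ => ?_
  have : c q * star (c q) = ((‖c q‖ ^ 2 : ℝ) : ℂ) := by
    rw [Complex.star_def, Complex.mul_conj, Complex.normSq_eq_norm_sq,
      Complex.ofReal_pow]
  rw [this, smul_eq_mul, Complex.re_ofReal_mul, trace_re_eq_frobSqC]

lemma Apow {M Q : ℕ} (A : Matrix (Fin M) (Fin M) ℝ) (lam : Fin Q → ℂ)
    (P : Fin Q → Matrix (Fin M) (Fin M) ℂ)
    (hdecomp : A.map (fun x => (x : ℂ)) = ∑ q, lam q • P q)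
    (hidem : ∀ q, P q * P q = P q)
    (horth : ∀ q q', q ≠ q' → P q * P q' = 0)
    (hPsum : ∑ q, P q = 1) :
    ∀ m : ℕ, (A.map (fun x => (x : ℂ))) ^ m = ∑ q, (lam q) ^ m • P q := by
  intro m
  induction m with
  | zero => simp [hPsum]
  | succ m ih =>
    rw [pow_succ, ih, hdecomp, Finset.sum_mul_sum]
    refine Finset.sum_congr rfl fun q _ => ?_
    have : ∀ q' : Fin Q, (lam q ^ m • P q) * (lam q' • P q')
        = (lam q ^ m * lam q') • (P q * P q') := by
      intro q'; rw [Matrix.smul_mul, Matrix.mul_smul, smul_smul]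
    simp only [this]
    rw [Finset.sum_eq_single q (fun q' _ hne => by
        rw [horth q q' (Ne.symm hne), smul_zero])
      (fun h => absurd (Finset.mem_univ q) h)]
    rw [hidem, pow_succ]

lemma ctr_rowsum {n M : ℕ} (hM : 0 < M) (B : Matrix (Fin n) (Fin M) ℝ) (i : Fin n) :
    ∑ j, ctr B i j = 0 := by
  have hMne : (M : ℝ) ≠ 0 := Nat.cast_ne_zero.mpr hM.ne'
  simp only [ctr, Matrix.of_apply]
  rw [Finset.sum_sub_distrib, Finset.sum_const, Finset.card_univ, Fintype.card_fin]
  rw [nsmul_eq_mul, mul_div_cancel₀ _ hMne, sub_self]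

lemma ctr_sub {n M : ℕ} (X Y : Matrix (Fin n) (Fin M) ℝ) : ctr (X - Y) = ctr X - ctr Y := by
  ext i j
  simp only [ctr, Matrix.of_apply, Matrix.sub_apply, Finset.sum_sub_distrib]
  ring

lemma ctr_smul {n M : ℕ} (c : ℝ) (X : Matrix (Fin n) (Fin M) ℝ) : ctr (c • X) = c • ctr X := by
  ext i j
  simp only [ctr, Matrix.of_apply, Matrix.smul_apply, ← Finset.mul_sum, smul_eq_mul]
  ring

lemma ctr_mulA {n M : ℕ} (Ac : Matrix (Fin M) (Fin M) ℝ)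
    (hrows : ∀ i, ∑ j, Ac i j = 1) (hcols : ∀ j, ∑ i, Ac i j = 1)
    (B : Matrix (Fin n) (Fin M) ℝ) : ctr (B * Ac) = ctr B * Ac := by
  ext i j
  simp only [ctr, Matrix.of_apply, Matrix.mul_apply]
  have h1 : ∑ j', ∑ k, B i k * Ac k j' = ∑ k, B i k := by
    rw [Finset.sum_comm]
    refine Finset.sum_congr rfl fun k _ => ?_
    rw [← Finset.mul_sum, hrows k, mul_one]
  have h2 : ∑ k, (B i k - (∑ j', B i j') / M) * Ac k j
      = (∑ k, B i k * Ac k j) - (∑ j', B i j') / M := by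
    simp only [sub_mul]
    rw [Finset.sum_sub_distrib, ← Finset.mul_sum, hcols j, mul_one]
  rw [h1, h2]

lemma ctr_map_mul_P0 {n M : ℕ} (hM : 0 < M) (B : Matrix (Fin n) (Fin M) ℝ) :
    (ctr B).map (fun x => (x : ℂ)) * (Matrix.of fun _ _ => (M : ℂ)⁻¹ : Matrix (Fin M) (Fin M) ℂ)
      = 0 := by
  ext i j
  simp only [Matrix.mul_apply, Matrix.map_apply, Matrix.of_apply, Matrix.zero_apply]
  rw [← Finset.sum_mul]
  have : ∑ k, ((ctr B i k : ℝ) : ℂ) = ((∑ k, ctr B i k : ℝ) : ℂ) := by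
    push_cast; rfl
  rw [this, ctr_rowsum hM, Complex.ofReal_zero, zero_mul]

lemma map_mulC {a b c : ℕ} (X : Matrix (Fin a) (Fin b) ℝ) (Y : Matrix (Fin b) (Fin c) ℝ) :
    (X * Y).map (fun x => (x : ℂ)) = X.map (fun x => (x : ℂ)) * Y.map (fun x => (x : ℂ)) := by
  ext i j
  simp only [Matrix.map_apply, Matrix.mul_apply]
  push_cast
  rfl

lemma map_powC {a : ℕ} (X : Matrix (Fin a) (Fin a) ℝ) (m : ℕ) :
    (X ^ m).map (fun x => (x : ℂ)) = (X.map (fun x => (x : ℂ))) ^ m := by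
  induction m with
  | zero =>
    simp only [pow_zero]
    ext i j
    simp [Matrix.map_apply, Matrix.one_apply]
    split <;> simp
  | succ m ih => rw [pow_succ, map_mulC, ih, pow_succ]

lemma frobSqC_zero {a b : ℕ} : frobSqC (0 : Matrix (Fin a) (Fin b) ℂ) = 0 := by
  simp [frobSqC]

lemma D1 {n M Q : ℕ} (hM : 0 < M) (hQ : 1 < Q)
    (A : Matrix (Fin M) (Fin M) ℝ) (lam : Fin Q → ℂ) (P : Fin Q → Matrix (Fin M) (Fin M) ℂ)
    (hdecomp : A.map (fun x => (x : ℂ)) = ∑ q, lam q • P q)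
    (hherm : ∀ q, (P q)ᴴ = P q)
    (hidem : ∀ q, P q * P q = P q)
    (horth : ∀ q q', q ≠ q' → P q * P q' = 0)
    (hPsum : ∑ q, P q = 1)
    (hP0 : ∀ q : Fin Q, (q : ℕ) = 0 → P q = Matrix.of fun _ _ => (M : ℂ)⁻¹)
    (B : Matrix (Fin n) (Fin M) ℝ) (m : ℕ) :
    frobSq (ctr B * A ^ m) = ∑ q ∈ Finset.univ.filter (fun q : Fin Q => (q : ℕ) ≠ 0),
      ‖lam q‖ ^ (2 * m) * frobSqC ((ctr B).map (fun x => (x : ℂ)) * P q) := by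
  have hmap : (ctr B * A ^ m).map (fun x => (x : ℂ))
      = (ctr B).map (fun x => (x : ℂ)) * ∑ q, (lam q) ^ m • P q := by
    rw [map_mulC, map_powC, Apow A lam P hdecomp hidem horth hPsum]
  have h1 : frobSq (ctr B * A ^ m)
      = ∑ q, ‖(lam q) ^ m‖ ^ 2 * frobSqC ((ctr B).map (fun x => (x : ℂ)) * P q) := by
    rw [← frobSqC_map (ctr B * A ^ m), hmap, pyth P hherm horth]
  rw [h1]
  have hsplit := Finset.sum_filter_add_sum_filter_not Finset.univ
    (fun q : Fin Q => (q : ℕ) = 0)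
    (fun q => ‖(lam q) ^ m‖ ^ 2 * frobSqC ((ctr B).map (fun x => (x : ℂ)) * P q))
  rw [← hsplit]
  have hz : ∑ q ∈ Finset.univ.filter (fun q : Fin Q => (q : ℕ) = 0),
      ‖(lam q) ^ m‖ ^ 2 * frobSqC ((ctr B).map (fun x => (x : ℂ)) * P q) = 0 := by
    refine Finset.sum_eq_zero fun q hq => ?_
    have hq0 : (q : ℕ) = 0 := (Finset.mem_filter.mp hq).2
    rw [hP0 q hq0, ctr_map_mul_P0 hM, frobSqC_zero, mul_zero]
  rw [hz, zero_add]
  refine Finset.sum_congr rfl fun q _ => ?_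
  rw [norm_pow, ← pow_mul, mul_comm m 2]


lemma sqrt_le_half_add (x t : ℝ) (hx : 0 ≤ x) (ht : 0 < t) :
    Real.sqrt x ≤ (t + x / t) / 2 := by
  set s := Real.sqrt x with hsdef
  have hs : s ^ 2 = x := Real.sq_sqrt hx
  have h1 : s * (2 * t) ≤ t ^ 2 + s ^ 2 := by nlinarith [sq_nonneg (s - t)]
  have h2 : s ≤ (t ^ 2 + s ^ 2) / (2 * t) := (le_div_iff₀ (by positivity)).mpr h1
  have h3 : (t ^ 2 + s ^ 2) / (2 * t) = (t + s ^ 2 / t) / 2 := by field_simp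
  rw [← hs]
  linarith [h2.trans_eq h3]

lemma integral_sqrt_le {Ω : Type*} [MeasurableSpace Ω] (μ : Measure Ω) [IsProbabilityMeasure μ]
    (f : Ω → ℝ) (hf0 : ∀ ω, 0 ≤ f ω) (hf : Integrable f μ)
    (hsf : Integrable (fun ω => Real.sqrt (f ω)) μ) :
    ∫ ω, Real.sqrt (f ω) ∂μ ≤ Real.sqrt (∫ ω, f ω ∂μ) := by
  have hI0 : 0 ≤ ∫ ω, f ω ∂μ := integral_nonneg hf0
  set I := ∫ ω, f ω ∂μ with hI
  have key : ∀ t : ℝ, 0 < t → ∫ ω, Real.sqrt (f ω) ∂μ ≤ (t + I / t) / 2 := by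
    intro t ht
    have hint : Integrable (fun ω => (t + f ω / t) / 2) μ :=
      ((integrable_const t).add (hf.div_const t)).div_const 2
    have hmono : ∫ ω, Real.sqrt (f ω) ∂μ ≤ ∫ ω, (t + f ω / t) / 2 ∂μ :=
      integral_mono hsf hint (fun ω => sqrt_le_half_add _ _ (hf0 ω) ht)
    have hval : ∫ ω, (t + f ω / t) / 2 ∂μ = (t + I / t) / 2 := by
      rw [integral_div, integral_add (integrable_const t) (hf.div_const t),
        integral_const, integral_div]
      simp [measure_univ]
      rfl
    exact hmono.trans_eq hval
  rcases eq_or_lt_of_le hI0 with h0 | hpos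
  · have h1 : ∀ ε : ℝ, 0 < ε → ∫ ω, Real.sqrt (f ω) ∂μ ≤ 0 + ε := by
      intro ε hε
      have := key ε hε
      rw [← h0] at this
      simp only [zero_div, add_zero] at this
      linarith
    have h2 : ∫ ω, Real.sqrt (f ω) ∂μ ≤ 0 := le_of_forall_pos_le_add h1
    rw [← h0, Real.sqrt_zero]
    exact h2
  · have ht : 0 < Real.sqrt I := Real.sqrt_pos.mpr hpos
    have := key (Real.sqrt I) ht
    rw [Real.div_sqrt] at this
    linarith

lemma meas_ctr_mul_entry {n M : ℕ} {Ω : Type*} [MeasurableSpace Ω]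
    (g : Ω → Matrix (Fin n) (Fin M) ℝ) (hg : ∀ i j, Measurable fun ω => g ω i j)
    (C : Matrix (Fin M) (Fin M) ℝ) (i : Fin n) (j : Fin M) :
    Measurable fun ω => (ctr (g ω) * C) i j := by
  simp only [Matrix.mul_apply, ctr, Matrix.of_apply]
  refine Finset.measurable_sum _ fun k _ => Measurable.mul_const ?_ _
  exact (hg i k).sub ((Finset.measurable_sum _ fun j' _ => hg i j').div_const _)

lemma meas_frobNorm_ctr_mul {n M : ℕ} {Ω : Type*} [MeasurableSpace Ω]
    (g : Ω → Matrix (Fin n) (Fin M) ℝ) (hg : ∀ i j, Measurable fun ω => g ω i j)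
    (C : Matrix (Fin M) (Fin M) ℝ) :
    Measurable fun ω => frobNorm (ctr (g ω) * C) := by
  unfold frobNorm frobSq
  refine Measurable.sqrt ?_
  refine Finset.measurable_sum _ fun i _ => Finset.measurable_sum _ fun j _ => ?_
  exact (meas_ctr_mul_entry g hg C i j).pow_const 2


/-- A matrix viewed as a Euclidean vector indexed by pairs. -/
def toE {n M : ℕ} (B : Matrix (Fin n) (Fin M) ℝ) : EuclideanSpace ℝ (Fin n × Fin M) :=
  (WithLp.linearEquiv 2 ℝ ((Fin n × Fin M) → ℝ)).symm (fun p => B p.1 p.2)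

lemma toE_norm {n M : ℕ} (B : Matrix (Fin n) (Fin M) ℝ) : frobNorm B = ‖toE B‖ := by
  rw [EuclideanSpace.norm_eq]
  unfold frobNorm frobSq
  congr 1
  rw [Fintype.sum_prod_type]
  refine Finset.sum_congr rfl fun i _ => Finset.sum_congr rfl fun j _ => ?_
  have : toE B (i, j) = B i j := rfl
  rw [this, Real.norm_eq_abs, sq_abs]

lemma frob_triangle {n M : ℕ} (X : Matrix (Fin n) (Fin M) ℝ) (η : ℝ) (hη : 0 ≤ η)
    (k : ℕ) (Y : ℕ → Matrix (Fin n) (Fin M) ℝ) :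
    frobNorm (X - η • ∑ s ∈ Finset.range k, Y s) ≤
      frobNorm X + η * ∑ s ∈ Finset.range k, frobNorm (Y s) := by
  have h1 : toE (X - η • ∑ s ∈ Finset.range k, Y s)
      = toE X - η • ∑ s ∈ Finset.range k, toE (Y s) := by
    unfold toE
    rw [← map_sum, ← _root_.map_smul, ← map_sub]
    congr 1
    funext p
    simp [Matrix.sub_apply, Matrix.smul_apply, Matrix.sum_apply]
  rw [toE_norm, h1]
  refine (norm_sub_le _ _).trans ?_
  rw [norm_smul, Real.norm_eq_abs, abs_of_nonneg hη]
  have h2 : ‖∑ s ∈ Finset.range k, toE (Y s)‖ ≤ ∑ s ∈ Finset.range k, frobNorm (Y s) := by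
    refine (norm_sum_le _ _).trans (le_of_eq ?_)
    exact Finset.sum_congr rfl fun s _ => (toE_norm _).symm
  have h3 : ‖toE X‖ = frobNorm X := (toE_norm X).symm
  have h4 : η * ‖∑ s ∈ Finset.range k, toE (Y s)‖
      ≤ η * ∑ s ∈ Finset.range k, frobNorm (Y s) := mul_le_mul_of_nonneg_left h2 hη
  linarith

/-- **Corollary 2 (consensus error, constant learning rate).** For the decentralized update
`W(k+1) = W(k) A - η G(k)` with a constant learning rate, the expected consensus error at
every iteration `k` satisfies the refined bound involving `α`. -/
theorem statement10
    (n M Q : ℕ) (hM : 0 < M) (hQ : 1 < Q)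
    -- the consensus matrix: nonnegative, doubly stochastic (A4), normal (A4),
    -- irreducible (strongly connected graph, A3) and primitive (positive diagonal)
    (A : Matrix (Fin M) (Fin M) ℝ)
    (hnonneg : ∀ i j, 0 ≤ A i j)
    (hrows : ∀ i, ∑ j, A i j = 1)
    (hcols : ∀ j, ∑ i, A i j = 1)
    (hnormal : Aᵀ * A = A * Aᵀ)
    (hirr : ∀ i j, ∃ k : ℕ, 0 < (A ^ k) i j)
    (hdiag : ∀ i, 0 < A i i)
    -- spectral decomposition of `A` into orthogonal projectors onto its `Q` distinct
    -- eigenspaces, with eigenvalues ordered by decreasing modulus, `λ₁ = 1 > |λ₂|`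
    (lam : Fin Q → ℂ) (P : Fin Q → Matrix (Fin M) (Fin M) ℂ)
    (hdecomp : A.map (fun x => (x : ℂ)) = ∑ q, lam q • P q)
    (hinj : Function.Injective lam)
    (hherm : ∀ q, (P q)ᴴ = P q)
    (hidem : ∀ q, P q * P q = P q)
    (horth : ∀ q q', q ≠ q' → P q * P q' = 0)
    (hPsum : ∑ q, P q = 1)
    (hord : ∀ q q' : Fin Q, q ≤ q' → ‖lam q'‖ ≤ ‖lam q‖)
    (hlam1 : ∀ q : Fin Q, (q : ℕ) = 0 → lam q = 1)
    (hP1 : ∀ q : Fin Q, (q : ℕ) = 0 → P q = Matrix.of fun _ _ => (M : ℂ)⁻¹)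
    (lam2 : ℝ) (hlam2 : lam2 = ‖lam ⟨1, hQ⟩‖) (hlam2lt : lam2 < 1)
    -- probability space carrying the minibatch randomness, the random iterates `W k`
    -- and the random stochastic subgradient matrices `G k`
    {Ω : Type*} [m0 : MeasurableSpace Ω] (μ : Measure Ω) [IsProbabilityMeasure μ]
    (W G : ℕ → Ω → Matrix (Fin n) (Fin M) ℝ)
    (hGmeas : ∀ k i j, Measurable fun ω => G k ω i j)
    -- constant learning rate and the decentralized update, with deterministic
    -- initialization `W0`
    (η : ℝ) (hη : 0 < η)
    (W0 : Matrix (Fin n) (Fin M) ℝ) (hW0 : ∀ ω, W 0 ω = W0)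
    (hupd : ∀ k ω, W (k + 1) ω = W k ω * A - η • G k ω)
    -- the energy constants `R_sp` and `E_sp`
    (Rsp Esp : ℝ) (hRsp : frobSq (ctr W0) ≤ Rsp)
    (hEsp : ∀ k, Integrable (fun ω => frobSq (ctr (G k ω))) μ ∧
      ∫ ω, frobSq (ctr (G k ω)) ∂μ ≤ Esp)
    -- bounds `e q` on the normalized fractions of energy of `ΔG(k)` in the eigenspaces,
    -- and the effective energy coefficient `α`
    (e : Fin Q → ℝ)
    (hesum : ∑ q ∈ Finset.univ.filter (fun q : Fin Q => (q : ℕ) ≠ 0), e q = 1)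
    (he : ∀ k, ∀ q : Fin Q, (q : ℕ) ≠ 0 →
      Integrable (fun ω => frobSqC ((ctr (G k ω)).map (fun x => (x : ℂ)) * P q)) μ ∧
      ∫ ω, frobSqC ((ctr (G k ω)).map (fun x => (x : ℂ)) * P q) ∂μ ≤ e q * Esp)
    (α : ℝ)
    (hα : α = if lam2 ≠ 0 then
        Real.sqrt (∑ q ∈ Finset.univ.filter (fun q : Fin Q => (q : ℕ) ≠ 0),
          e q * (‖lam q‖ / lam2) ^ 2)
      else 1)
    (hWint : ∀ k, Integrable (fun ω => frobNorm (ctr (W k ω))) μ)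
 :
    ∀ k : ℕ,
      ∫ ω, frobNorm (ctr (W k ω)) ∂μ ≤
        Real.sqrt M * Real.sqrt Rsp * lam2 ^ k
        + η * Real.sqrt Esp *
            ((1 - α) * (if 1 ≤ k then (1 : ℝ) else 0)
              + α * ((1 - lam2 ^ k) / (1 - lam2))) := by
  -- basic positivity facts
  have hl2nn : 0 ≤ lam2 := hlam2 ▸ norm_nonneg _
  have hα0 : 0 ≤ α := by
    rw [hα]; split
    · exact Real.sqrt_nonneg _
    · exact zero_le_one
  have hRsp0 : 0 ≤ Rsp := le_trans (frobSq_nonneg _) hRsp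
  have hEsp0 : 0 ≤ Esp := le_trans (integral_nonneg fun ω => frobSq_nonneg _) (hEsp 0).2
  have hlamle : ∀ q : Fin Q, (q : ℕ) ≠ 0 → ‖lam q‖ ≤ lam2 := by
    intro q hq
    rw [hlam2]
    exact hord ⟨1, hQ⟩ q (by
      rw [Fin.le_def]
      exact Nat.one_le_iff_ne_zero.mpr hq)
  -- the key spectral identity, specialized
  have hD1 : ∀ (B : Matrix (Fin n) (Fin M) ℝ) (m : ℕ),
      frobSq (ctr B * A ^ m) = ∑ q ∈ Finset.univ.filter (fun q : Fin Q => (q : ℕ) ≠ 0),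
        ‖lam q‖ ^ (2 * m) * frobSqC ((ctr B).map (fun x => (x : ℂ)) * P q) :=
    fun B m => D1 hM hQ A lam P hdecomp hherm hidem horth hPsum hP1 B m
  -- abbreviations
  set filt := Finset.univ.filter (fun q : Fin Q => (q : ℕ) ≠ 0) with hfilt
  -- expectations of projected gradient energies
  set Eq := fun (s : ℕ) (q : Fin Q) =>
    ∫ ω, frobSqC ((ctr (G s ω)).map (fun x => (x : ℂ)) * P q) ∂μ with hEqdef
  have hEqnn : ∀ s q, 0 ≤ Eq s q := fun s q => integral_nonneg fun ω => frobSqC_nonneg _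
  -- integrability of the squared norms
  have hfint : ∀ (s m : ℕ), Integrable (fun ω => frobSq (ctr (G s ω) * A ^ m)) μ := by
    intro s m
    have hfun : (fun ω => frobSq (ctr (G s ω) * A ^ m))
        = fun ω => ∑ q ∈ filt,
            ‖lam q‖ ^ (2 * m) * frobSqC ((ctr (G s ω)).map (fun x => (x : ℂ)) * P q) :=
      funext fun ω => hD1 (G s ω) m
    rw [hfun]
    exact integrable_finset_sum _ fun q hq =>
      ((he s q (Finset.mem_filter.mp hq).2).1.const_mul _)
  -- integrability of the norms
  have hgint : ∀ (s m : ℕ), Integrable (fun ω => frobNorm (ctr (G s ω) * A ^ m)) μ := by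
    intro s m
    refine Integrable.mono' (((integrable_const (1:ℝ)).add (hfint s m)).div_const 2)
      ((meas_frobNorm_ctr_mul (G s) (hGmeas s) (A ^ m)).aestronglyMeasurable) ?_
    refine Filter.Eventually.of_forall fun ω => ?_
    rw [Real.norm_eq_abs, abs_of_nonneg (frobNorm_nonneg _)]
    have := sqrt_le_half_add (frobSq (ctr (G s ω) * A ^ m)) 1 (frobSq_nonneg _) one_pos
    rw [div_one] at this
    refine this.trans (le_of_eq ?_)
    simp [Pi.add_apply]
  -- expectation identity for squared norms
  have hintsum : ∀ (s m : ℕ), ∫ ω, frobSq (ctr (G s ω) * A ^ m) ∂μ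
      = ∑ q ∈ filt, ‖lam q‖ ^ (2 * m) * Eq s q := by
    intro s m
    have hfun : (fun ω => frobSq (ctr (G s ω) * A ^ m))
        = fun ω => ∑ q ∈ filt,
            ‖lam q‖ ^ (2 * m) * frobSqC ((ctr (G s ω)).map (fun x => (x : ℂ)) * P q) :=
      funext fun ω => hD1 (G s ω) m
    rw [hfun, integral_finset_sum _ fun q hq =>
      ((he s q (Finset.mem_filter.mp hq).2).1.const_mul _)]
    exact Finset.sum_congr rfl fun q hq => by rw [integral_const_mul]
  -- bound the expected squared energy
  have hsqb : ∀ (s m : ℕ), ∫ ω, frobSq (ctr (G s ω) * A ^ m) ∂μ ≤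
      (if m = 0 then Esp else (α * lam2 ^ m) ^ 2 * Esp) := by
    intro s m
    rw [hintsum s m]
    rcases Nat.eq_zero_or_pos m with hm0 | hmpos
    · subst hm0
      rw [if_pos rfl]
      have hterm : ∀ q ∈ filt, ‖lam q‖ ^ (2 * 0) * Eq s q ≤ e q * Esp := by
        intro q hq
        rw [Nat.mul_zero, pow_zero, one_mul]
        exact (he s q (Finset.mem_filter.mp hq).2).2
      calc ∑ q ∈ filt, ‖lam q‖ ^ (2 * 0) * Eq s q ≤ ∑ q ∈ filt, e q * Esp :=
            Finset.sum_le_sum hterm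
        _ = Esp := by rw [← Finset.sum_mul, hesum, one_mul]
    · rw [if_neg hmpos.ne']
      by_cases hl0 : lam2 = 0
      · have hz : ∀ q ∈ filt, ‖lam q‖ ^ (2 * m) * Eq s q = 0 := by
          intro q hq
          have h1 : ‖lam q‖ = 0 :=
            le_antisymm (hl0 ▸ hlamle q (Finset.mem_filter.mp hq).2) (norm_nonneg _)
          rw [h1, zero_pow (by omega), zero_mul]
        rw [Finset.sum_eq_zero hz, hl0, zero_pow hmpos.ne', mul_zero, zero_pow two_ne_zero,
          zero_mul]
      · by_cases hE0 : Esp = 0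
        · have hEq0 : ∀ q ∈ filt, Eq s q = 0 := by
            intro q hq
            refine le_antisymm ?_ (hEqnn s q)
            have := (he s q (Finset.mem_filter.mp hq).2).2
            rw [hE0, mul_zero] at this
            exact this
          rw [Finset.sum_eq_zero (fun q hq => by rw [hEq0 q hq, mul_zero]), hE0, mul_zero]
        · have hEpos : 0 < Esp := lt_of_le_of_ne hEsp0 (Ne.symm hE0)
          have hee : ∀ q ∈ filt, 0 ≤ e q := by
            intro q hq
            have h1 := (he s q (Finset.mem_filter.mp hq).2).2
            have h2 := hEqnn s q
            nlinarith
          have hterm : ∀ q ∈ filt, ‖lam q‖ ^ (2 * m) * Eq s q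
              ≤ lam2 ^ (2 * (m - 1)) * (e q * ‖lam q‖ ^ 2) * Esp := by
            intro q hq
            have hq' := (Finset.mem_filter.mp hq).2
            have h1 : Eq s q ≤ e q * Esp := (he s q hq').2
            have h2 : ‖lam q‖ ^ (2 * m) = ‖lam q‖ ^ 2 * ‖lam q‖ ^ (2 * (m - 1)) := by
              rw [← pow_add]; congr 1; omega
            have h3 : ‖lam q‖ ^ (2 * (m - 1)) ≤ lam2 ^ (2 * (m - 1)) :=
              pow_le_pow_left₀ (norm_nonneg _) (hlamle q hq') _
            have h4 : (0:ℝ) ≤ ‖lam q‖ ^ (2 * m) := pow_nonneg (norm_nonneg _) _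
            calc ‖lam q‖ ^ (2 * m) * Eq s q ≤ ‖lam q‖ ^ (2 * m) * (e q * Esp) :=
                  mul_le_mul_of_nonneg_left h1 h4
              _ = (e q * Esp) * (‖lam q‖ ^ 2 * ‖lam q‖ ^ (2 * (m - 1))) := by rw [h2]; ring
              _ ≤ (e q * Esp) * (‖lam q‖ ^ 2 * lam2 ^ (2 * (m - 1))) := by
                  refine mul_le_mul_of_nonneg_left ?_ (mul_nonneg (hee q hq) hEsp0)
                  exact mul_le_mul_of_nonneg_left h3 (sq_nonneg _)
              _ = lam2 ^ (2 * (m - 1)) * (e q * ‖lam q‖ ^ 2) * Esp := by ring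
          have hα2 : α ^ 2 = ∑ q ∈ filt, e q * (‖lam q‖ / lam2) ^ 2 := by
            rw [hα, if_pos hl0]
            exact Real.sq_sqrt (Finset.sum_nonneg fun q hq =>
              mul_nonneg (hee q hq) (sq_nonneg _))
          have hS : ∑ q ∈ filt, lam2 ^ (2 * (m - 1)) * (e q * ‖lam q‖ ^ 2) * Esp
              = (α * lam2 ^ m) ^ 2 * Esp := by
            rw [mul_pow, hα2, Finset.sum_mul, Finset.sum_mul]
            refine Finset.sum_congr rfl fun q hq => ?_
            have hp : (lam2 ^ m) ^ 2 = lam2 ^ (2 * (m - 1)) * lam2 ^ 2 := by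
              rw [← pow_mul, ← pow_add]; congr 1; omega
            rw [div_pow, hp]
            field_simp
          exact (Finset.sum_le_sum hterm).trans_eq hS
  -- bound the expected consensus energy of the gradients after mixing
  have hGbound : ∀ (s m : ℕ), ∫ ω, frobNorm (ctr (G s ω) * A ^ m) ∂μ ≤
      (if m = 0 then Real.sqrt Esp else α * lam2 ^ m * Real.sqrt Esp) := by
    intro s m
    have h1 : ∫ ω, frobNorm (ctr (G s ω) * A ^ m) ∂μ
        ≤ Real.sqrt (∫ ω, frobSq (ctr (G s ω) * A ^ m) ∂μ) := by
      simpa [frobNorm] using integral_sqrt_le μ (fun ω => frobSq (ctr (G s ω) * A ^ m))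
        (fun ω => frobSq_nonneg _) (hfint s m) (by simpa [frobNorm] using hgint s m)
    refine (h1.trans (Real.sqrt_le_sqrt (hsqb s m))).trans (le_of_eq ?_)
    rcases Nat.eq_zero_or_pos m with hm0 | hmpos
    · subst hm0; simp
    · rw [if_neg hmpos.ne', if_neg hmpos.ne', Real.sqrt_mul (sq_nonneg _),
        Real.sqrt_sq (mul_nonneg hα0 (pow_nonneg hl2nn m))]
  -- representation of the consensus error
  have hrep : ∀ (k : ℕ) (ω : Ω), ctr (W k ω)
      = ctr W0 * A ^ k - η • ∑ s ∈ Finset.range k, ctr (G s ω) * A ^ (k - 1 - s) := by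
    intro k
    induction k with
    | zero =>
      intro ω
      simp [hW0 ω]
    | succ k ih =>
      intro ω
      rw [hupd k ω, ctr_sub, ctr_mulA A hrows hcols, ctr_smul, ih ω]
      rw [Matrix.sub_mul, Matrix.smul_mul, Matrix.sum_mul]
      have h1 : ctr W0 * A ^ k * A = ctr W0 * A ^ (k + 1) := by
        rw [Matrix.mul_assoc, ← pow_succ]
      have h2 : ∀ s ∈ Finset.range k,
          ctr (G s ω) * A ^ (k - 1 - s) * A = ctr (G s ω) * A ^ (k - s) := by
        intro s hs
        have hs' := Finset.mem_range.mp hs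
        rw [Matrix.mul_assoc, ← pow_succ]
        congr 2
        omega
      rw [h1, Finset.sum_congr rfl h2, Finset.sum_range_succ]
      have h3 : ∀ s, k + 1 - 1 - s = k - s := fun s => by omega
      simp only [h3]
      rw [Nat.sub_self, pow_zero, Matrix.mul_one, smul_add, sub_sub]
  -- pointwise triangle inequality
  have hptw : ∀ (k : ℕ) (ω : Ω), frobNorm (ctr (W k ω)) ≤
      frobNorm (ctr W0 * A ^ k)
        + η * ∑ s ∈ Finset.range k, frobNorm (ctr (G s ω) * A ^ (k - 1 - s)) := by
    intro k ω
    rw [hrep k ω]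
    exact frob_triangle (ctr W0 * A ^ k) η hη.le k (fun s => ctr (G s ω) * A ^ (k - 1 - s))
  intro k
  -- integrate the pointwise bound
  have hintG : Integrable (fun ω => ∑ s ∈ Finset.range k,
      frobNorm (ctr (G s ω) * A ^ (k - 1 - s))) μ :=
    integrable_finset_sum _ fun s _ => hgint s _
  have hint1 : ∫ ω, frobNorm (ctr (W k ω)) ∂μ ≤ frobNorm (ctr W0 * A ^ k)
      + η * ∑ s ∈ Finset.range k, ∫ ω, frobNorm (ctr (G s ω) * A ^ (k - 1 - s)) ∂μ := by
    have hm := integral_mono (hWint k)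
      ((integrable_const _).add (hintG.const_mul η)) (hptw k)
    have hval : ∫ ω, (frobNorm (ctr W0 * A ^ k)
        + η * ∑ s ∈ Finset.range k, frobNorm (ctr (G s ω) * A ^ (k - 1 - s))) ∂μ
        = frobNorm (ctr W0 * A ^ k)
          + η * ∑ s ∈ Finset.range k, ∫ ω, frobNorm (ctr (G s ω) * A ^ (k - 1 - s)) ∂μ := by
      rw [integral_add (integrable_const _) (hintG.const_mul η), integral_const,
        probReal_univ, one_smul, integral_const_mul,
        integral_finset_sum _ (fun s _ => hgint s _)]
    exact hm.trans_eq hval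
  -- bound for the initial term
  have hW0bound : frobNorm (ctr W0 * A ^ k) ≤ Real.sqrt Rsp * lam2 ^ k := by
    have h0 : frobSq (ctr W0) = ∑ q ∈ filt,
        frobSqC ((ctr W0).map (fun x => (x : ℂ)) * P q) := by
      have := hD1 W0 0
      rw [pow_zero, Matrix.mul_one] at this
      simpa using this
    have h1 : frobSq (ctr W0 * A ^ k) ≤ lam2 ^ (2 * k) * Rsp := by
      rw [hD1 W0 k]
      have h2 : ∀ q ∈ filt, ‖lam q‖ ^ (2 * k) * frobSqC ((ctr W0).map (fun x => (x : ℂ)) * P q)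
          ≤ lam2 ^ (2 * k) * frobSqC ((ctr W0).map (fun x => (x : ℂ)) * P q) := by
        intro q hq
        exact mul_le_mul_of_nonneg_right
          (pow_le_pow_left₀ (norm_nonneg _) (hlamle q (Finset.mem_filter.mp hq).2) _)
          (frobSqC_nonneg _)
      refine (Finset.sum_le_sum h2).trans ?_
      rw [← Finset.mul_sum, ← h0]
      exact mul_le_mul_of_nonneg_left hRsp (pow_nonneg hl2nn _)
    have h3 := Real.sqrt_le_sqrt h1
    have h4 : Real.sqrt (lam2 ^ (2 * k) * Rsp) = Real.sqrt Rsp * lam2 ^ k := by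
      have h5 : lam2 ^ (2 * k) = (lam2 ^ k) ^ 2 := by rw [← pow_mul]; congr 1; omega
      rw [h5, Real.sqrt_mul (sq_nonneg _), Real.sqrt_sq (pow_nonneg hl2nn k), mul_comm]
    rw [h4] at h3
    exact h3
  -- bound for the gradient sum
  have hsum : ∑ s ∈ Finset.range k, ∫ ω, frobNorm (ctr (G s ω) * A ^ (k - 1 - s)) ∂μ
      ≤ Real.sqrt Esp * ((1 - α) * (if 1 ≤ k then (1 : ℝ) else 0)
          + α * ((1 - lam2 ^ k) / (1 - lam2))) := by
    have h1 : ∑ s ∈ Finset.range k, ∫ ω, frobNorm (ctr (G s ω) * A ^ (k - 1 - s)) ∂μ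
        ≤ ∑ s ∈ Finset.range k, (if k - 1 - s = 0 then Real.sqrt Esp
            else α * lam2 ^ (k - 1 - s) * Real.sqrt Esp) :=
      Finset.sum_le_sum fun s _ => hGbound s (k - 1 - s)
    refine h1.trans ?_
    rw [Finset.sum_range_reflect
      (fun m => if m = 0 then Real.sqrt Esp else α * lam2 ^ m * Real.sqrt Esp) k]
    cases k with
    | zero => simp
    | succ j =>
      rw [Finset.sum_range_succ']
      have hne1 : lam2 - 1 ≠ 0 := by
        intro h; rw [sub_eq_zero] at h; exact (ne_of_lt hlam2lt) h
      have hd : (1 : ℝ) - lam2 ≠ 0 := by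
        intro h; apply hne1; linarith [sub_eq_zero.mp h]
      have hgeom : ∑ i ∈ Finset.range j,
          (if i + 1 = 0 then Real.sqrt Esp else α * lam2 ^ (i + 1) * Real.sqrt Esp)
          = α * Real.sqrt Esp * (lam2 * ((lam2 ^ j - 1) / (lam2 - 1))) := by
        have hc : ∀ i ∈ Finset.range j,
            (if i + 1 = 0 then Real.sqrt Esp else α * lam2 ^ (i + 1) * Real.sqrt Esp)
            = α * Real.sqrt Esp * lam2 * lam2 ^ i := by
          intro i _
          rw [if_neg (Nat.succ_ne_zero i), pow_succ]
          ring
        rw [Finset.sum_congr rfl hc, ← Finset.mul_sum, geom_sum_eq (by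
          intro h; exact (ne_of_lt hlam2lt) h) j]
        ring
      rw [hgeom, if_pos rfl, if_pos (Nat.succ_le_succ (Nat.zero_le j))]
      refine le_of_eq ?_
      field_simp
      ring
  -- conclusion
  have hfirst : frobNorm (ctr W0 * A ^ k) ≤ Real.sqrt M * Real.sqrt Rsp * lam2 ^ k := by
    refine hW0bound.trans ?_
    have h1 : (1 : ℝ) ≤ Real.sqrt M := by
      rw [show (1 : ℝ) = Real.sqrt 1 from Real.sqrt_one.symm]
      exact Real.sqrt_le_sqrt (by exact_mod_cast hM)
    calc Real.sqrt Rsp * lam2 ^ k = 1 * (Real.sqrt Rsp * lam2 ^ k) := (one_mul _).symm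
      _ ≤ Real.sqrt M * (Real.sqrt Rsp * lam2 ^ k) :=
          mul_le_mul_of_nonneg_right h1 (mul_nonneg (Real.sqrt_nonneg _) (pow_nonneg hl2nn k))
      _ = Real.sqrt M * Real.sqrt Rsp * lam2 ^ k := by ring
  have hsecond : η * ∑ s ∈ Finset.range k, ∫ ω, frobNorm (ctr (G s ω) * A ^ (k - 1 - s)) ∂μ
      ≤ η * Real.sqrt Esp * ((1 - α) * (if 1 ≤ k then (1 : ℝ) else 0)
          + α * ((1 - lam2 ^ k) / (1 - lam2))) := by
    rw [mul_assoc]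
    exact mul_le_mul_of_nonneg_left hsum hη.le
  linarith [hint1]

end
end
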